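/- arXiv:1910.06936 — 2 statements merged into one kernel-verified Lean document; each statement's English description precedes it below -/
import Mathlib

section
/- Under the assumptions E[1/x] = X₋₁ ∈ (0,∞) and E[y/x] = e^{-κΔt} + τ*(1 - e^{-κΔt})X₋₁, the limit of the MLE τ̂ₙ = ((1/n)Σᵢ yᵢ/xᵢ + κΔt - 1)/((1/n)Σᵢ 1/xᵢ · κΔt) as n → ∞ (almost surely, by the law of large numbers and continuous mapping) equals τ*(1 - e^{-κΔt})/(κΔt) + (e^{-κΔt} + κΔt - 1)/(X₋₁κΔt), and this limit equals τ* + O(Δt) as Δt → 0. -/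
open Real Filter

/-- If the sample averages `(1/n)Σ yᵢ/xᵢ` and `(1/n)Σ 1/xᵢ` converge (law of large numbers)
to `e^{-κΔt} + τ*(1-e^{-κΔt})X₋₁` and `X₋₁` respectively, then the MLE
`τ̂ₙ = ((1/n)Σ yᵢ/xᵢ + κΔt - 1)/((1/n)Σ 1/xᵢ · κΔt)` converges to
`τ*(1-e^{-κΔt})/(κΔt) + (e^{-κΔt}+κΔt-1)/(X₋₁κΔt)`, and that limit is `τ* + O(Δt)`
as `Δt → 0⁺`. -/
theorem mle_tau_consistency (κ τs Xm1 : ℝ) (hκ : 0 < κ) (hX : 0 < Xm1)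
    (a b : ℝ → ℕ → ℝ)
    (ha : ∀ Δt > 0, Tendsto (a Δt) atTop
        (nhds (Real.exp (-κ * Δt) + τs * (1 - Real.exp (-κ * Δt)) * Xm1)))
    (hb : ∀ Δt > 0, Tendsto (b Δt) atTop (nhds Xm1)) :
    (∀ Δt > 0, Tendsto (fun n => (a Δt n + κ * Δt - 1) / (b Δt n * (κ * Δt))) atTop
        (nhds (τs * (1 - Real.exp (-κ * Δt)) / (κ * Δt)
          + (Real.exp (-κ * Δt) + κ * Δt - 1) / (Xm1 * (κ * Δt))))) ∧
    ∃ C > 0, ∃ δ > 0, ∀ Δt, 0 < Δt → Δt < δ →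
      |τs * (1 - Real.exp (-κ * Δt)) / (κ * Δt)
        + (Real.exp (-κ * Δt) + κ * Δt - 1) / (Xm1 * (κ * Δt)) - τs| ≤ C * Δt := by
  constructor
  · intro Δt hΔt
    have hu : 0 < κ * Δt := mul_pos hκ hΔt
    have hden : Xm1 * (κ * Δt) ≠ 0 := by positivity
    have h := Tendsto.div (((ha Δt hΔt).add_const (κ * Δt)).sub_const 1)
      (((hb Δt hΔt).mul_const (κ * Δt))) hden
    convert h using 2
    · rfl
    field_simp
    ring
  · refine ⟨κ * |1 / Xm1 - τs| + 1, by positivity, 1, one_pos, fun Δt hΔt _ => ?_⟩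
    set u := κ * Δt with hu
    have hu0 : 0 < u := mul_pos hκ hΔt
    have hEu : Real.exp (-κ * Δt) = Real.exp (-u) := by rw [neg_mul, hu]
    rw [hEu]
    set E := Real.exp (-u) with hE
    have hE1 : 1 - u ≤ E := by
      rw [hE]; linarith [Real.add_one_le_exp (-u)]
    have hE2 : E ≤ 1 / (1 + u) := by
      rw [hE, Real.exp_neg, inv_eq_one_div]
      apply one_div_le_one_div_of_le
      · linarith
      · linarith [Real.add_one_le_exp u]
    have key1 : 0 ≤ E - 1 + u := by linarith
    have key2 : E - 1 + u ≤ u ^ 2 := by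
      have h1 : 1 + u > 0 := by linarith
      have : E * (1 + u) ≤ 1 := by
        calc E * (1 + u) ≤ (1 / (1 + u)) * (1 + u) := by
              exact mul_le_mul_of_nonneg_right hE2 (le_of_lt h1)
          _ = 1 := by field_simp
      nlinarith
    have heq : τs * (1 - E) / u + (E + u - 1) / (Xm1 * u) - τs
        = (E - 1 + u) / u * (1 / Xm1 - τs) := by
      field_simp
      ring
    rw [heq, abs_mul]
    have h3 : |(E - 1 + u) / u| ≤ u := by
      rw [abs_of_nonneg (div_nonneg key1 hu0.le)]
      rw [div_le_iff₀ hu0]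
      nlinarith
    calc |(E - 1 + u) / u| * |1 / Xm1 - τs| ≤ u * |1 / Xm1 - τs| :=
          mul_le_mul_of_nonneg_right h3 (abs_nonneg _)
      _ = (κ * |1 / Xm1 - τs|) * Δt := by rw [hu]; ring
      _ ≤ (κ * |1 / Xm1 - τs| + 1) * Δt := by nlinarith
end

section
/- For the MLE of κ in the CIR Euler discretization, κ̂ₙ = (1/Δt) · (τ·(1/n)Σyᵢ/xᵢ - (1/n)Σyᵢ - τ + (1/n)Σxᵢ) / (τ²·(1/n)Σ1/xᵢ - 2τ + (1/n)Σxᵢ), if the sample averages converge to X₋₁ = E[1/x], X₀ = E[x], and E[y] = X₀e^{-κ*Δt} + τ(1 - e^{-κ*Δt}), E[y/x] = e^{-κ*Δt} + τ(1 - e^{-κ*Δt})X₋₁, and the denominator limit τ²X₋₁ - 2τ + X₀ ≠ 0, then κ̂ₙ converges to (1/Δt)·(1 - e^{-κ*Δt})·(τ²X₋₁ - 2τ + X₀)/(τ²X₋₁ - 2τ + X₀) = (1 - e^{-κ*Δt})/Δt, which equals κ* + O(Δt) as Δt → 0. -/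
open Real Filter

/-- Consistency of the MLE of `κ` in the CIR Euler discretization: if the sample averages
of `y/x`, `y`, `1/x`, `x` converge to their population values (given by the CIR conditional
mean identity), and the denominator limit `τ²X₋₁ - 2τ + X₀ ≠ 0`, then
`κ̂ₙ = (1/Δt)·(τ·avg(y/x) - avg(y) - τ + avg(x))/(τ²·avg(1/x) - 2τ + avg(x))`
converges to `(1 - e^{-κ*Δt})/Δt`, which equals `κ* + O(Δt)` as `Δt → 0`. -/
theorem mle_kappa_consistency (κs τ σ Δt X0 Xm1 : ℝ)
    (hκ : 0 < κs) (hτ : 0 < τ) (hσ : 0 < σ) (hΔt : 0 < Δt)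
    (a b c d : ℕ → ℝ)
    (ha : Tendsto a atTop (nhds (Real.exp (-κs * Δt) + τ * (1 - Real.exp (-κs * Δt)) * Xm1)))
    (hc : Tendsto c atTop (nhds (X0 * Real.exp (-κs * Δt) + τ * (1 - Real.exp (-κs * Δt)))))
    (hb : Tendsto b atTop (nhds Xm1))
    (hd : Tendsto d atTop (nhds X0))
    (hden : τ ^ 2 * Xm1 - 2 * τ + X0 ≠ 0) :
    Tendsto (fun n => (1 / Δt) * (τ * a n - c n - τ + d n) / (τ ^ 2 * b n - 2 * τ + d n))
        atTop (nhds ((1 - Real.exp (-κs * Δt)) / Δt)) ∧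
    ∃ C > 0, ∃ δ > 0, ∀ t, 0 < t → t < δ →
      |(1 - Real.exp (-κs * t)) / t - κs| ≤ C * t := by
  constructor
  · set e := Real.exp (-κs * Δt) with he
    have hnum : Tendsto (fun n => (1 / Δt) * (τ * a n - c n - τ + d n)) atTop
        (nhds ((1 / Δt) * (τ * (e + τ * (1 - e) * Xm1) - (X0 * e + τ * (1 - e)) - τ + X0))) :=
      (((ha.const_mul τ).sub hc).sub_const τ |>.add hd).const_mul (1 / Δt)
    have := hnum.div (((hb.const_mul (τ ^ 2)).sub_const (2 * τ)).add hd) hden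
    convert this using 2
    · rfl
    have hD : τ * (e + τ * (1 - e) * Xm1) - (X0 * e + τ * (1 - e)) - τ + X0
        = (1 - e) * (τ ^ 2 * Xm1 - 2 * τ + X0) := by ring
    rw [hD]
    rw [mul_div_assoc, mul_div_cancel_right₀ _ hden]
    ring
  · refine ⟨κs ^ 2, by positivity, 1, one_pos, fun t ht _ => ?_⟩
    have hx : 0 ≤ κs * t := by positivity
    have h1 : 1 - κs * t ≤ Real.exp (-(κs * t)) := by
      have := Real.add_one_le_exp (-(κs * t)); linarith
    have h2 : Real.exp (-(κs * t)) ≤ 1 - κs * t + (κs * t) ^ 2 / 2 := by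
      have hq : 1 + κs * t + (κs * t) ^ 2 / 2 ≤ Real.exp (κs * t) := by
        have := Real.quadratic_le_exp_of_nonneg hx
        linarith
      have hpos : (0:ℝ) < 1 + κs * t + (κs * t) ^ 2 / 2 := by positivity
      rw [Real.exp_neg]
      have hep := Real.exp_pos (κs * t)
      have hinv := mul_inv_cancel₀ hep.ne'
      have hipos : 0 < (Real.exp (κs * t))⁻¹ := inv_pos.mpr hep
      nlinarith [sq_nonneg (κs * t), sq_nonneg ((κs * t) ^ 2), mul_pos hipos hep]
    have hkt : -κs * t = -(κs * t) := by ring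
    rw [hkt, abs_le]
    constructor
    · rw [div_sub' ht.ne', le_div_iff₀ ht]
      nlinarith
    · rw [div_sub' ht.ne', div_le_iff₀ ht]
      nlinarith
end
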